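/- For every real x with 0 < x ≤ 1/2 and every real y ≥ 8, the quantity (1/2)(log π + γ + x/(x²+y²) + (1-x)/((1-x)²+y²) + Σ_{n=1}^∞ ((2n+x)/((2n+x)²+y²) - 1/(2n)) + Σ_{n=1}^∞ ((2n+1-x)/((2n+1-x)²+y²) - 1/(2n))) is strictly negative. -/

import Mathlib

open Real

lemma key1_aux (a y m : ℝ) (hm : 1 ≤ m) (ha : 2*m ≤ a) (ha2 : a ≤ 2*m+1) (hy : 0 < y) :
    a/(a^2+y^2) - 1/(2*m) ≤ 0 ∧ 1/(2*m) - a/(a^2+y^2) ≤ (2+y^2)/8 * (1/m^2) := by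
  have hm0 : 0 < m := by linarith
  have ha0 : 0 < a := by linarith
  have hd : (0:ℝ) < a^2+y^2 := by positivity
  constructor
  · rw [sub_nonpos, div_le_div_iff₀ hd (by positivity)]
    nlinarith [sq_nonneg y, mul_nonneg (le_of_lt ha0) (sub_nonneg.2 ha)]
  · have heq : 1/(2*m) - a/(a^2+y^2) = (a*(a-2*m)+y^2)/((2*m)*(a^2+y^2)) := by
      field_simp; ring
    have hr : (2+y^2)/8 * (1/m^2) = (2+y^2)/(8*m^2) := by field_simp
    rw [heq, hr, div_le_div_iff₀ (by positivity) (by positivity)]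
    have h1 : 8*m^2*(a*(a-2*m)) ≤ 4*m*a^2 := by
      nlinarith [mul_le_mul_of_nonneg_left (show a-2*m ≤ 1 by linarith)
          (show (0:ℝ) ≤ 8*m^2*a by positivity),
        mul_nonneg (mul_nonneg (by positivity : (0:ℝ) ≤ 4*m) ha0.le) (sub_nonneg.2 ha)]
    have h2 : y^2*(8*m^2) ≤ 2*m*(y^2*a^2) := by
      have haa : 4*m ≤ a^2 := by nlinarith
      nlinarith [mul_le_mul_of_nonneg_left haa (show (0:ℝ) ≤ 2*m*y^2 by positivity)]
    nlinarith [h1, h2, mul_nonneg (by positivity : (0:ℝ) ≤ 4*m) (sq_nonneg y),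
      mul_nonneg (by positivity : (0:ℝ) ≤ 2*m) (sq_nonneg (y^2))]

lemma sumC_aux (y : ℝ) : Summable (fun n : ℕ+ => (2+y^2)/8 * (1/(n:ℝ)^2)) := by
  have h : Summable (fun n : ℕ => (2+y^2)/8 * (1/(n:ℝ)^2)) :=
    (summable_one_div_nat_pow.mpr one_lt_two).mul_left _
  exact h.comp_injective (fun a b h => PNat.coe_injective h :
    Function.Injective (fun n : ℕ+ => (n:ℕ)))

lemma tsum_le_finsum_aux (y : ℝ) (hy : 0 < y) (a : ℕ+ → ℝ)
    (ha : ∀ n : ℕ+, 2*(n:ℝ) ≤ a n) (ha2 : ∀ n : ℕ+, a n ≤ 2*(n:ℝ)+1) :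
    ∑' n : ℕ+, (a n/((a n)^2+y^2) - 1/(2*(n:ℝ))) ≤
      ∑ n ∈ ({1,2,3,4,5,6,7} : Finset ℕ+), (a n/((a n)^2+y^2) - 1/(2*(n:ℝ))) := by
  set f : ℕ+ → ℝ := fun n => a n/((a n)^2+y^2) - 1/(2*(n:ℝ)) with hf
  have hm : ∀ n : ℕ+, (1:ℝ) ≤ (n:ℝ) := fun n => by exact_mod_cast n.one_le
  have hk := fun n : ℕ+ => key1_aux (a n) y (n:ℝ) (hm n) (ha n) (ha2 n) hy
  have hle : ∀ n : ℕ+, f n ≤ 0 := fun n => (hk n).1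
  have hnegs : Summable (fun n : ℕ+ => -(f n)) := by
    apply Summable.of_nonneg_of_le (fun n => neg_nonneg.2 (hle n))
      (fun n => by simpa [hf, neg_sub] using (hk n).2) (sumC_aux y)
  have h := Summable.sum_le_tsum ({1,2,3,4,5,6,7} : Finset ℕ+)
    (fun i _ => neg_nonneg.2 (hle i)) hnegs
  rw [tsum_neg] at h
  simp only [Finset.sum_neg_distrib] at h
  linarith

lemma gamma_lt_aux : eulerMascheroniConstant < 6082/10000 := by
  have h := eulerMascheroniConstant_lt_eulerMascheroniSeq' 16
  have h16 : eulerMascheroniSeq' 16 = (harmonic 16 : ℝ) - log 16 := by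
    rw [eulerMascheroniSeq']; norm_num
  have hh : (harmonic 16 : ℚ) = 2436559/720720 := by
    simp [harmonic_succ, harmonic_zero]; norm_num
  have hlog : log 16 = 4 * log 2 := by
    rw [show (16:ℝ) = 2^4 by norm_num, log_pow]; push_cast; ring
  have h2 := Real.log_two_gt_d9
  rw [h16, hh, hlog] at h
  push_cast at h
  linarith

lemma logpi_lt_aux : Real.log π < 23/20 := by
  rw [log_lt_iff_lt_exp pi_pos]
  have hs := Real.sum_le_exp_of_nonneg (show (0:ℝ) ≤ 23/20 by norm_num) 12
  have hpi := pi_lt_d6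
  refine lt_of_lt_of_le ?_ hs
  simp_rw [Finset.sum_range_succ, Nat.factorial_succ]
  norm_num
  linarith

lemma bounds_aux (x y : ℝ) (hx0 : 0 < x) (hx : x ≤ 1/2) (hy2 : (64:ℝ) ≤ y^2) :
    ((2+x)/((2+x)^2+y^2) ≤ 10/281) ∧
    ((4+x)/((4+x)^2+y^2) ≤ 18/337) ∧
    ((6+x)/((6+x)^2+y^2) ≤ 26/425) ∧
    ((8+x)/((8+x)^2+y^2) ≤ 1/16) ∧
    ((10+x)/((10+x)^2+y^2) ≤ 5/82) ∧
    ((12+x)/((12+x)^2+y^2) ≤ 3/52) ∧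
    ((14+x)/((14+x)^2+y^2) ≤ 7/130) ∧
    ((3-x)/((3-x)^2+y^2) ≤ 3/73) ∧
    ((5-x)/((5-x)^2+y^2) ≤ 5/89) ∧
    ((7-x)/((7-x)^2+y^2) ≤ 7/113) ∧
    ((9-x)/((9-x)^2+y^2) ≤ 1/16) ∧
    ((11-x)/((11-x)^2+y^2) ≤ 5/82) ∧
    ((13-x)/((13-x)^2+y^2) ≤ 3/52) ∧
    ((15-x)/((15-x)^2+y^2) ≤ 7/130) ∧
    (x/(x^2+y^2) ≤ 1/128) ∧
    ((1-x)/((1-x)^2+y^2) ≤ 1/64) := by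
  refine ⟨?_, ?_, ?_, ?_, ?_, ?_, ?_, ?_, ?_, ?_, ?_, ?_, ?_, ?_, ?_, ?_⟩
  · rw [div_le_iff₀ (by positivity)]
    nlinarith [hy2, mul_nonneg (show (0:ℝ) ≤ 1/2-x by linarith)
      (show (0:ℝ) ≤ 118/5-x by linarith)]
  · rw [div_le_iff₀ (by positivity)]
    nlinarith [hy2, mul_nonneg (show (0:ℝ) ≤ 1/2-x by linarith)
      (show (0:ℝ) ≤ 92/9-x by linarith)]
  · rw [div_le_iff₀ (by positivity)]
    nlinarith [hy2, mul_nonneg (show (0:ℝ) ≤ 1/2-x by linarith)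
      (show (0:ℝ) ≤ 50/13-x by linarith)]
  · rw [div_le_iff₀ (by positivity)]; nlinarith [hy2, sq_nonneg x]
  · rw [div_le_iff₀ (by positivity)]; nlinarith [hy2, sq_nonneg x]
  · rw [div_le_iff₀ (by positivity)]; nlinarith [hy2, sq_nonneg x]
  · rw [div_le_iff₀ (by positivity)]; nlinarith [hy2, sq_nonneg x]
  -- per-term bounds, series 2
  · rw [div_le_iff₀ (by positivity)]; nlinarith [hy2, sq_nonneg x]
  · rw [div_le_iff₀ (by positivity)]; nlinarith [hy2, sq_nonneg x]
  · rw [div_le_iff₀ (by positivity)]; nlinarith [hy2, sq_nonneg x]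
  · rw [div_le_iff₀ (by positivity)]; nlinarith [hy2, sq_nonneg (1-x)]
  · rw [div_le_iff₀ (by positivity)]; nlinarith [hy2, sq_nonneg x]
  · rw [div_le_iff₀ (by positivity)]; nlinarith [hy2, sq_nonneg x]
  · rw [div_le_iff₀ (by positivity)]; nlinarith [hy2, sq_nonneg x]
  · rw [div_le_iff₀ (by positivity)]; nlinarith [hy2, sq_nonneg x]
  · rw [div_le_iff₀ (by positivity)]; nlinarith [hy2, sq_nonneg (1-x)]

theorem alpha_neg_for_large_y (x y : ℝ) (hx0 : 0 < x) (hx : x ≤ 1 / 2) (hy : 8 ≤ y) :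
    (1 / 2) * (Real.log π + eulerMascheroniConstant +
      x / (x ^ 2 + y ^ 2) + (1 - x) / ((1 - x) ^ 2 + y ^ 2) +
      (∑' n : ℕ+, ((2 * n + x) / ((2 * (n : ℝ) + x) ^ 2 + y ^ 2) - 1 / (2 * (n : ℝ)))) +
      (∑' n : ℕ+, ((2 * n + 1 - x) / ((2 * (n : ℝ) + 1 - x) ^ 2 + y ^ 2) - 1 / (2 * (n : ℝ))))) <
      0 := by
  have hy0 : (0:ℝ) < y := by linarith
  have hy2 : (64:ℝ) ≤ y^2 := by nlinarith
  obtain ⟨q1,q2,q3,q4,q5,q6,q7,r1,r2,r3,r4,r5,r6,r7,hxa,hxb⟩ :=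
    bounds_aux x y hx0 hx hy2
  have T1 := tsum_le_finsum_aux y hy0 (fun n => 2*(n:ℝ)+x)
    (fun n => by linarith) (fun n => by linarith)
  have T2 := tsum_le_finsum_aux y hy0 (fun n => 2*(n:ℝ)+1-x)
    (fun n => by linarith) (fun n => by linarith)
  have U1 : (∑' n : ℕ+, ((2 * n + x) / ((2 * (n : ℝ) + x) ^ 2 + y ^ 2) - 1 / (2 * (n : ℝ)))) ≤
      10/281+18/337+26/425+1/16+5/82+3/52+7/130-363/280 := by
    refine le_trans T1 ?_
    norm_num [Finset.sum_insert, Finset.mem_insert]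
    linarith [q1, q2, q3, q4, q5, q6, q7]
  have U2 : (∑' n : ℕ+, ((2 * n + 1 - x) / ((2 * (n : ℝ) + 1 - x) ^ 2 + y ^ 2) - 1 / (2 * (n : ℝ)))) ≤
      3/73+5/89+7/113+1/16+5/82+3/52+7/130-363/280 := by
    refine le_trans T2 ?_
    norm_num [Finset.sum_insert, Finset.mem_insert]
    linarith [r1, r2, r3, r4, r5, r6, r7]
  have hg := gamma_lt_aux
  have hl := logpi_lt_aux
  linarith [U1, U2, hxa, hxb, hg, hl]
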